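/- Let n ≥ 3, M ∈ ℂ, and let P : ZMod n → ℂ be an n-gon such that the iterate 𝒞_M^n(P) is defined (all triples encountered at every stage are non-collinear). Then 𝒞_M^n(P) is the image of P under a direct similarity centered at M: there exists σ ∈ ℂ, σ ≠ 0, such that (𝒞_M^n(P)) i − M = σ*(P i − M) for all i. -/

import Mathlib

open scoped Classical
open ComplexConjugate

/-- Circumcenter of three points of `ℂ` (junk value `0` if the points are collinear).
When the points are affinely independent this is the unique point equidistant from all three. -/
noncomputable def ccenter (A B C : ℂ) : ℂ :=
  if h : AffineIndependent ℝ ![A, B, C] then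
    (⟨![A, B, C], h⟩ : Affine.Simplex ℝ ℂ 2).circumcenter
  else 0

/-- The circumcenter map `𝒞_M`: the `i`-th vertex of the image polygon is the
circumcenter of `M`, `P i`, `P (i+1)`. -/
noncomputable def cmap {n : ℕ} (M : ℂ) (P : ZMod n → ℂ) : ZMod n → ℂ :=
  fun i => ccenter M (P i) (P (i + 1))

/-- Perpendicular-bisector condition: `z` is equidistant from `0` and `a`. -/
def Ecc (z a : ℂ) : Prop := z * conj a + conj z * a = a * conj a

lemma abs_eq_iff_ecc (z a : ℂ) : ‖z‖ = ‖z - a‖ ↔ Ecc z a := by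
  unfold Ecc
  constructor
  · intro h
    have h2 : z * conj z = (z - a) * (conj z - conj a) := by
      rw [← map_sub, Complex.mul_conj, Complex.mul_conj]
      norm_cast
      rw [← Complex.sq_norm, ← Complex.sq_norm, h]
    linear_combination h2
  · intro h
    have h2 : Complex.normSq z = Complex.normSq (z - a) := by
      have : (Complex.normSq z : ℂ) = (Complex.normSq (z - a) : ℂ) := by
        rw [← Complex.mul_conj, ← Complex.mul_conj, map_sub]
        linear_combination h
      exact_mod_cast this
    rw [← Complex.sq_norm, ← Complex.sq_norm] at h2
    nlinarith [norm_nonneg z, norm_nonneg (z - a)]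

lemma li_of_affineIndependent {M A B : ℂ} (h : AffineIndependent ℝ ![M, A, B]) :
    LinearIndependent ℝ ![A - M, B - M] := by
  rw [affineIndependent_iff_not_collinear_set] at h
  rw [linearIndependent_fin2]
  simp only [Matrix.cons_val_one, Matrix.head_cons, Matrix.cons_val_zero]
  constructor
  · intro hBM
    apply h
    rw [collinear_iff_of_mem (Set.mem_insert M {A, B})]
    refine ⟨A - M, fun p hp => ?_⟩
    rcases hp with rfl | rfl | rfl
    · exact ⟨0, by simp⟩
    · exact ⟨1, by simp⟩
    · exact ⟨0, by simp [show p = M by linear_combination hBM]⟩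
  · intro s hs
    apply h
    rw [collinear_iff_of_mem (Set.mem_insert M {A, B})]
    refine ⟨B - M, fun p hp => ?_⟩
    rcases hp with rfl | rfl | rfl
    · exact ⟨0, by simp⟩
    · refine ⟨s, ?_⟩
      have : p = s • (B - M) + M := by rw [hs]; ring
      simpa using this
    · exact ⟨1, by simp⟩

lemma li_unique {a b z : ℂ} (hab : LinearIndependent ℝ ![a, b])
    (h1 : z * conj a + conj z * a = 0) (h2 : z * conj b + conj z * b = 0) : z = 0 := by
  rw [linearIndependent_fin2] at hab
  simp only [Matrix.cons_val_one, Matrix.head_cons, Matrix.cons_val_zero] at hab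
  obtain ⟨hb, hsb⟩ := hab
  have key : a * conj b - conj a * b ≠ 0 := by
    intro hk
    apply hsb ((a * conj b).re / Complex.normSq b)
    have hre : (((a * conj b).re : ℝ) : ℂ) = a * conj b := by
      rw [Complex.conj_eq_iff_re.mp]
      rw [map_mul, Complex.conj_conj]
      linear_combination -hk
    rw [Complex.real_smul]
    push_cast
    rw [div_mul_eq_mul_div, hre]
    rw [div_eq_iff (by exact_mod_cast fun h0 => hb (Complex.normSq_eq_zero.mp h0))]
    rw [← Complex.mul_conj]
    ring
  have hz : z * (a * conj b - conj a * b) = 0 := by linear_combination a * h2 - b * h1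
  rcases mul_eq_zero.mp hz with h | h
  · exact h
  · exact absurd h key

lemma ccenter_spec {M A B : ℂ} (h : AffineIndependent ℝ ![M, A, B]) :
    Ecc (ccenter M A B - M) (A - M) ∧ Ecc (ccenter M A B - M) (B - M) := by
  have hcc : ccenter M A B = (⟨![M, A, B], h⟩ : Affine.Simplex ℝ ℂ 2).circumcenter := by
    rw [ccenter, dif_pos h]
  set s : Affine.Simplex ℝ ℂ 2 := ⟨![M, A, B], h⟩ with hs
  have h0 := s.dist_circumcenter_eq_circumradius 0
  have h1 := s.dist_circumcenter_eq_circumradius 1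
  have h2 := s.dist_circumcenter_eq_circumradius 2
  have hp0 : s.points 0 = M := rfl
  have hp1 : s.points 1 = A := rfl
  have hp2 : s.points 2 = B := rfl
  rw [hp0] at h0; rw [hp1] at h1; rw [hp2] at h2
  constructor
  · rw [← abs_eq_iff_ecc]
    have hMA : dist M s.circumcenter = dist A s.circumcenter := h0.trans h1.symm
    rw [Complex.dist_eq, Complex.dist_eq] at hMA
    rw [hcc]
    calc ‖s.circumcenter - M‖ = ‖M - s.circumcenter‖ := by
          rw [← norm_neg]; ring_nf
      _ = ‖A - s.circumcenter‖ := hMA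
      _ = ‖s.circumcenter - M - (A - M)‖ := by
          rw [← norm_neg]; ring_nf
  · rw [← abs_eq_iff_ecc]
    have hMB : dist M s.circumcenter = dist B s.circumcenter := h0.trans h2.symm
    rw [Complex.dist_eq, Complex.dist_eq] at hMB
    rw [hcc]
    calc ‖s.circumcenter - M‖ = ‖M - s.circumcenter‖ := by
          rw [← norm_neg]; ring_nf
      _ = ‖B - s.circumcenter‖ := hMB
      _ = ‖s.circumcenter - M - (B - M)‖ := by
          rw [← norm_neg]; ring_nf

lemma ccenter_eq {M A B z : ℂ} (h : AffineIndependent ℝ ![M, A, B])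
    (h1 : Ecc (z - M) (A - M)) (h2 : Ecc (z - M) (B - M)) : z = ccenter M A B := by
  obtain ⟨s1, s2⟩ := ccenter_spec h
  have li := li_of_affineIndependent h
  unfold Ecc at h1 h2 s1 s2
  have e1 : (z - ccenter M A B) * conj (A - M) + conj (z - ccenter M A B) * (A - M) = 0 := by
    simp only [map_sub] at h1 s1 ⊢
    linear_combination h1 - s1
  have e2 : (z - ccenter M A B) * conj (B - M) + conj (z - ccenter M A B) * (B - M) = 0 := by
    simp only [map_sub] at h2 s2 ⊢
    linear_combination h2 - s2
  have := li_unique li e1 e2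
  linear_combination this

lemma ecc_step {b q r : ℂ} (hb : b ≠ 0) (hqb : Ecc q b) (hrb : Ecc r b) :
    Ecc (q * r / b) q ∧ Ecc (q * r / b) r := by
  unfold Ecc at *
  have hbc : conj b ≠ 0 := fun h' => hb (by simpa using h')
  constructor
  · simp only [map_div₀, map_mul]
    field_simp
    linear_combination (q * conj q) * hrb
  · simp only [map_div₀, map_mul]
    field_simp
    linear_combination (r * conj r) * hqb

/-- `𝒞_M^n(P)` is the image of `P` under a direct similarity centered at `M`. -/
theorem circumcenter_map_pow_n_is_similarity
    (n : ℕ) (hn : 3 ≤ n) (M : ℂ) (P : ZMod n → ℂ)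
    (hdef : ∀ k < n, ∀ i : ZMod n,
      AffineIndependent ℝ ![M, ((cmap M)^[k] P) i, ((cmap M)^[k] P) (i + 1)]) :
    ∃ σ : ℂ, σ ≠ 0 ∧ ∀ i : ZMod n, ((cmap M)^[n] P) i - M = σ * (P i - M) := by
  have hnz : NeZero n := ⟨by omega⟩
  set Q : ℕ → ZMod n → ℂ := fun k => (cmap M)^[k] P with hQ
  have hstep : ∀ k i, Q (k + 1) i = ccenter M (Q k i) (Q k (i + 1)) := by
    intro k i
    show ((cmap M)^[k + 1] P) i = _
    rw [Function.iterate_succ_apply']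
    rfl
  have hne : ∀ k < n, ∀ i, Q k i ≠ M := by
    intro k hk i hMe
    have h := hdef k hk i
    have h01 : (0 : Fin 3) = 1 := h.injective (by
      simp only [Matrix.cons_val_zero, Matrix.cons_val_one, Matrix.head_cons]
      exact hMe.symm)
    exact absurd h01 (by decide)
  have hEcc : ∀ k < n, ∀ i, Ecc (Q (k + 1) i - M) (Q k i - M) ∧
      Ecc (Q (k + 1) i - M) (Q k (i + 1) - M) := by
    intro k hk i
    rw [hstep k i]
    exact ccenter_spec (hdef k hk i)
  have hQne : ∀ k < n, ∀ i, Q (k + 1) i ≠ M := by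
    intro k hk i heq
    have h1 := (hEcc k hk i).1
    unfold Ecc at h1
    rw [heq, sub_self] at h1
    simp only [map_zero, zero_mul, mul_zero, add_zero, zero_add] at h1
    rcases mul_eq_zero.mp h1.symm with h | h
    · exact hne k hk i (by linear_combination h)
    · have h' : Q k i - M = 0 := by simpa using congrArg (starRingEnd ℂ) h
      exact hne k hk i (by linear_combination h')
  have hkey : ∀ k, k + 1 < n → ∀ i,
      Q (k + 2) i - M = (Q (k + 1) i - M) * (Q (k + 1) (i + 1) - M) / (Q k (i + 1) - M) := by
    intro k hk i
    have hb : Q k (i + 1) - M ≠ 0 := sub_ne_zero.mpr (hne k (by omega) (i + 1))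
    obtain ⟨e1, e2⟩ := ecc_step hb (hEcc k (by omega) i).2 (hEcc k (by omega) (i + 1)).1
    have hz := ccenter_eq (hdef (k + 1) hk i)
        (z := (Q (k + 1) i - M) * (Q (k + 1) (i + 1) - M) / (Q k (i + 1) - M) + M)
        (by rw [add_sub_cancel_right]; exact e1)
        (by rw [add_sub_cancel_right]; exact e2)
    rw [← hstep (k + 1) i] at hz
    linear_combination -hz
  set x : ℕ → ZMod n → ℂ := fun k i => (Q (k + 1) i - M) / (Q k i - M) with hx
  have hxshift : ∀ k, k + 1 < n → ∀ i, x (k + 1) i = x k (i + 1) := by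
    intro k hk i
    have hq : Q (k + 1) i - M ≠ 0 := sub_ne_zero.mpr (hQne k (by omega) i)
    have hb : Q k (i + 1) - M ≠ 0 := sub_ne_zero.mpr (hne k (by omega) (i + 1))
    show (Q (k + 2) i - M) / (Q (k + 1) i - M) = (Q (k + 1) (i + 1) - M) / (Q k (i + 1) - M)
    rw [hkey k hk i]
    field_simp
  have hx0 : ∀ k, k < n → ∀ i, x k i = x 0 (i + (k : ZMod n)) := by
    intro k
    induction k with
    | zero => intro _ i; norm_num
    | succ m ih =>
      intro hm i
      rw [hxshift m hm i, ih (by omega) (i + 1)]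
      congr 1
      push_cast
      ring
  have htel : ∀ m, m ≤ n → ∀ i, Q m i - M = (∏ k ∈ Finset.range m, x k i) * (P i - M) := by
    intro m
    induction m with
    | zero => intro _ i; simp [hQ]
    | succ m ih =>
      intro hm i
      have hd : Q m i - M ≠ 0 := sub_ne_zero.mpr (hne m (by omega) i)
      have hstep2 : Q (m + 1) i - M = x m i * (Q m i - M) := by
        show _ = (Q (m + 1) i - M) / (Q m i - M) * (Q m i - M)
        field_simp
      rw [Finset.prod_range_succ, hstep2, ih (by omega) i]
      ring
  refine ⟨∏ j : ZMod n, x 0 j, ?_, ?_⟩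
  · rw [Finset.prod_ne_zero_iff]
    intro j _
    exact div_ne_zero (sub_ne_zero.mpr (hQne 0 (by omega) j))
      (sub_ne_zero.mpr (hne 0 (by omega) j))
  · intro i
    have htot := htel n le_rfl i
    show Q n i - M = _
    rw [htot]
    congr 1
    calc ∏ k ∈ Finset.range n, x k i
        = ∏ k ∈ Finset.range n, x 0 (i + (k : ZMod n)) :=
          Finset.prod_congr rfl fun k hk => hx0 k (Finset.mem_range.mp hk) i
      _ = ∏ j : ZMod n, x 0 j := by
          refine Finset.prod_nbij' (fun k => i + (k : ZMod n)) (fun j => (j - i).val)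
            (fun a _ => Finset.mem_univ _) (fun j _ => Finset.mem_range.mpr (ZMod.val_lt _))
            (fun a ha => ?_) (fun j _ => ?_) (fun a _ => rfl)
          · show (i + (a : ZMod n) - i).val = a
            rw [add_sub_cancel_left, ZMod.val_cast_of_lt (Finset.mem_range.mp ha)]
          · show i + (((j - i).val : ℕ) : ZMod n) = j
            rw [ZMod.natCast_rightInverse (j - i)]
            ring
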